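/- Fix n ≥ 3 and let x_n be the unique maximum point of p_n on [0,1]. If 0 ≤ x < y ≤ x_n, then p_m(x) < p_m(y) for every m ≥ n; that is, the y-strategy strictly dominates the x-strategy on the set {n, n+1, n+2, …}. -/

import Mathlib

open Finset Real

/-- `p_n(x) = 1 - x - Σ_{k=2}^{n} (1-x)^k/(k(k-1))`, the winning probability of the
`x`-strategy with `n` items. -/
noncomputable def pwin (n : ℕ) (x : ℝ) : ℝ :=
  1 - x - ∑ k ∈ Finset.Icc 2 n, (1 - x) ^ k / ((k : ℝ) * ((k : ℝ) - 1))

/-- The derivative of `pwin n`. -/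
noncomputable def qder (n : ℕ) (x : ℝ) : ℝ :=
  -1 + ∑ k ∈ Finset.Icc 2 n, (1 - x) ^ (k - 1) / ((k : ℝ) - 1)

lemma hasDerivAt_pwin (n : ℕ) (x : ℝ) : HasDerivAt (pwin n) (qder n x) x := by
  have h1 : HasDerivAt (fun x : ℝ => 1 - x) (-1) x := by
    simpa using (hasDerivAt_id x).const_sub 1
  have hterm : ∀ k ∈ Finset.Icc 2 n,
      HasDerivAt (fun x : ℝ => (1 - x) ^ k / ((k : ℝ) * ((k : ℝ) - 1)))
        (-((1 - x) ^ (k - 1) / ((k : ℝ) - 1))) x := by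
    intro k hk
    have hk2 : 2 ≤ k := (Finset.mem_Icc.mp hk).1
    have hk2' : (2 : ℝ) ≤ (k : ℝ) := by exact_mod_cast hk2
    have hk0 : (k : ℝ) ≠ 0 := by linarith
    have hk1 : (k : ℝ) - 1 ≠ 0 := by linarith
    have h := (h1.fun_pow k).div_const ((k : ℝ) * ((k : ℝ) - 1))
    refine h.congr_deriv ?_
    field_simp
  have hsum := HasDerivAt.fun_sum hterm
  have h := h1.sub hsum
  have heq : -1 - ∑ k ∈ Finset.Icc 2 n, -((1 - x) ^ (k - 1) / ((k : ℝ) - 1)) = qder n x := by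
    rw [Finset.sum_neg_distrib]
    unfold qder
    ring
  rw [heq] at h
  exact h

lemma continuous_pwin (n : ℕ) : Continuous (pwin n) :=
  continuous_iff_continuousAt.mpr fun x => (hasDerivAt_pwin n x).differentiableAt.continuousAt

lemma qder_strictAnti (n : ℕ) (hn : 2 ≤ n) : StrictAntiOn (qder n) (Set.Icc (0:ℝ) 1) := by
  intro a ha b hb hab
  unfold qder
  apply add_lt_add_right
  apply Finset.sum_lt_sum
  · intro k hk
    have hk2 : 2 ≤ k := (Finset.mem_Icc.mp hk).1
    have hk1 : (0 : ℝ) < (k : ℝ) - 1 := by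
      have : (2 : ℝ) ≤ (k : ℝ) := by exact_mod_cast hk2
      linarith
    have hp : (1 - b) ^ (k - 1) ≤ (1 - a) ^ (k - 1) :=
      pow_le_pow_left₀ (by linarith [hb.2]) (by linarith) _
    exact div_le_div_of_nonneg_right hp hk1.le |>.trans_eq rfl
  · refine ⟨2, Finset.mem_Icc.mpr ⟨le_refl 2, hn⟩, ?_⟩
    norm_num
    linarith

lemma qder_pos (n : ℕ) (hn : 3 ≤ n) (xn : ℝ) (hxn : xn ∈ Set.Icc (0:ℝ) 1)
    (hmax : IsMaxOn (pwin n) (Set.Icc (0:ℝ) 1) xn)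
    {t : ℝ} (ht0 : 0 ≤ t) (htxn : t < xn) : 0 < qder n t := by
  by_contra h
  push_neg at h
  have ht1 : t ≤ 1 := le_trans htxn.le hxn.2
  have hanti : StrictAntiOn (pwin n) (Set.Icc t xn) := by
    apply strictAntiOn_of_deriv_neg (convex_Icc _ _) ((continuous_pwin n).continuousOn)
    intro s hs
    rw [interior_Icc] at hs
    rw [(hasDerivAt_pwin n s).deriv]
    have hlt : qder n s < qder n t :=
      qder_strictAnti n (by omega) ⟨ht0, ht1⟩
        ⟨le_trans ht0 hs.1.le, le_trans hs.2.le hxn.2⟩ hs.1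
    linarith
  have h1 : pwin n xn < pwin n t :=
    hanti ⟨le_refl t, htxn.le⟩ ⟨htxn.le, le_refl xn⟩ htxn
  have h2 : pwin n t ≤ pwin n xn := hmax ⟨ht0, ht1⟩
  linarith

lemma qder_mono (n m : ℕ) (hnm : n ≤ m) {s : ℝ} (hs0 : 0 ≤ s) (hs1 : s ≤ 1) :
    qder n s ≤ qder m s := by
  unfold qder
  apply add_le_add_right
  apply Finset.sum_le_sum_of_subset_of_nonneg
  · exact Finset.Icc_subset_Icc_right hnm
  · intro k hk _
    have hk2 : 2 ≤ k := (Finset.mem_Icc.mp hk).1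
    have hk1 : (0 : ℝ) < (k : ℝ) - 1 := by
      have : (2 : ℝ) ≤ (k : ℝ) := by exact_mod_cast hk2
      linarith
    apply div_nonneg (pow_nonneg (by linarith) _) (by linarith)

/-- If `xn` is the maximum point of `p_n` on `[0,1]` (`n ≥ 3`) and `0 ≤ x < y ≤ xn`,
then the `y`-strategy strictly dominates the `x`-strategy on `{n, n+1, …}`. -/
theorem stmt8 (n : ℕ) (hn : 3 ≤ n) (xn : ℝ) (hxn : xn ∈ Set.Icc (0:ℝ) 1)
    (hmax : IsMaxOn (pwin n) (Set.Icc (0:ℝ) 1) xn)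
    (x y : ℝ) (hx : 0 ≤ x) (hxy : x < y) (hy : y ≤ xn)
    (m : ℕ) (hm : n ≤ m) : pwin m x < pwin m y := by
  have hmono : StrictMonoOn (pwin m) (Set.Icc x y) := by
    apply strictMonoOn_of_deriv_pos (convex_Icc x y) ((continuous_pwin m).continuousOn)
    intro s hs
    rw [interior_Icc] at hs
    rw [(hasDerivAt_pwin m s).deriv]
    have hs0 : 0 ≤ s := le_trans hx hs.1.le
    have hsxn : s < xn := lt_of_lt_of_le hs.2 hy
    have h1 : 0 < qder n s := qder_pos n hn xn hxn hmax hs0 hsxn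
    have h2 : qder n s ≤ qder m s :=
      qder_mono n m hm hs0 (le_trans hsxn.le hxn.2)
    linarith
  exact hmono ⟨le_refl x, hxy.le⟩ ⟨hxy.le, le_refl y⟩ hxy
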